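/- Let Ψ satisfy Ψ'(x) = exp(−3 Ψ(x)²) with Ψ(0) = 0, fix σ > 0, and define q_j = Ψ'(jσ) and π_i = σ + Σ_{j=0}^{i−1} σ q_j. Then for every i ≥ 0, σ ≤ π_i − Ψ(iσ) ≤ 2σ. -/

import Mathlib

open Real Finset

theorem stmt_3 (Ψ : ℝ → ℝ) (σ : ℝ) (hσ : 0 < σ)
    (hΨ : ∀ x : ℝ, 0 ≤ x → HasDerivAt Ψ (Real.exp (-3 * Ψ x ^ 2)) x)
    (hΨ0 : Ψ 0 = 0)
    (q : ℕ → ℝ) (hq : ∀ j : ℕ, q j = deriv Ψ (j * σ))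
    (Pi : ℕ → ℝ) (hPi : ∀ i : ℕ, Pi i = σ + ∑ j ∈ Finset.range i, σ * q j) :
    ∀ i : ℕ, σ ≤ Pi i - Ψ (i * σ) ∧ Pi i - Ψ (i * σ) ≤ 2 * σ := by
  have hd : ∀ x : ℝ, 0 ≤ x → deriv Ψ x = Real.exp (-3 * Ψ x ^ 2) :=
    fun x hx => (hΨ x hx).deriv
  have hcont : ContinuousOn Ψ (Set.Ici 0) := fun x hx =>
    (hΨ x hx).continuousAt.continuousWithinAt
  have hmono : MonotoneOn Ψ (Set.Ici 0) := by
    apply monotoneOn_of_deriv_nonneg (convex_Ici 0) hcont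
    · intro x hx
      rw [interior_Ici] at hx
      exact (hΨ x hx.le).differentiableAt.differentiableWithinAt
    · intro x hx
      rw [interior_Ici] at hx
      rw [hd x hx.le]
      positivity
  have hΨnn : ∀ x : ℝ, 0 ≤ x → 0 ≤ Ψ x := fun x hx => by
    have := hmono Set.self_mem_Ici hx hx
    rwa [hΨ0] at this
  have hanti : ∀ a b : ℝ, 0 ≤ a → a ≤ b →
      Real.exp (-3 * Ψ b ^ 2) ≤ Real.exp (-3 * Ψ a ^ 2) := by
    intro a b ha hab
    apply Real.exp_le_exp.2
    have h1 : Ψ a ≤ Ψ b := hmono ha (ha.trans hab) hab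
    nlinarith [hΨnn a ha, hΨnn b (ha.trans hab)]
  have hqe : ∀ j : ℕ, q j = Real.exp (-3 * Ψ (j * σ) ^ 2) := fun j => by
    rw [hq, hd _ (by positivity)]
  have hq0 : q 0 = 1 := by
    rw [hqe, Nat.cast_zero, zero_mul, hΨ0]
    norm_num
  have hqnn : ∀ j : ℕ, 0 ≤ q j := fun j => by
    rw [hqe]; positivity
  have key : ∀ j : ℕ, σ * q (j + 1) ≤ Ψ ((j + 1 : ℕ) * σ) - Ψ (j * σ) ∧
      Ψ ((j + 1 : ℕ) * σ) - Ψ (j * σ) ≤ σ * q j := by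
    intro j
    have hjσ : (0 : ℝ) ≤ (j : ℝ) * σ := by positivity
    have hlt : (j : ℝ) * σ < ((j + 1 : ℕ) : ℝ) * σ := by
      push_cast
      nlinarith
    obtain ⟨c, hc, hceq⟩ := exists_hasDerivAt_eq_slope Ψ
      (fun x => Real.exp (-3 * Ψ x ^ 2)) hlt
      (hcont.mono (Set.Icc_subset_Ici_self.trans (by
        rw [Set.Ici_subset_Ici]; exact hjσ)))
      (fun x hx => hΨ x (hjσ.trans hx.1.le))
    have hc1 : (0:ℝ) ≤ c := hjσ.trans hc.1.le
    have heq : Ψ ((j + 1 : ℕ) * σ) - Ψ (j * σ) = σ * Real.exp (-3 * Ψ c ^ 2) := by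
      have hne : ((j + 1 : ℕ) : ℝ) * σ - (j : ℝ) * σ ≠ 0 := sub_ne_zero.2 (ne_of_gt hlt)
      rw [eq_div_iff hne] at hceq
      push_cast at hceq ⊢
      linear_combination -hceq
    rw [heq]
    constructor
    · rw [hqe]
      have := hanti c (((j + 1 : ℕ) : ℝ) * σ) hc1 hc.2.le
      nlinarith
    · rw [hqe]
      have := hanti ((j : ℝ) * σ) c hjσ hc.1.le
      nlinarith
  have hsumΔ : ∀ i : ℕ, ∑ j ∈ Finset.range i,
      (Ψ ((j + 1 : ℕ) * σ) - Ψ (j * σ)) = Ψ (i * σ) := by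
    intro i
    rw [Finset.sum_range_sub (fun j : ℕ => Ψ (j * σ))]
    simp [hΨ0]
  have hsumq : ∀ i : ℕ, ∑ j ∈ Finset.range i, σ * q (j + 1) =
      (∑ j ∈ Finset.range i, σ * q j) + σ * q i - σ * q 0 := by
    intro i
    have := Finset.sum_range_sub (fun j : ℕ => σ * q j) i
    have h2 : ∑ j ∈ Finset.range i, (σ * q (j + 1) - σ * q j)
        = σ * q i - σ * q 0 := this
    rw [Finset.sum_sub_distrib] at h2
    linarith
  intro i
  rw [hPi]
  constructor
  · have h1 : ∑ j ∈ Finset.range i, (Ψ ((j + 1 : ℕ) * σ) - Ψ (j * σ)) ≤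
        ∑ j ∈ Finset.range i, σ * q j :=
      Finset.sum_le_sum fun j _ => (key j).2
    rw [hsumΔ] at h1
    linarith
  · have h1 : ∑ j ∈ Finset.range i, σ * q (j + 1) ≤
        ∑ j ∈ Finset.range i, (Ψ ((j + 1 : ℕ) * σ) - Ψ (j * σ)) :=
      Finset.sum_le_sum fun j _ => (key j).1
    rw [hsumΔ, hsumq] at h1
    have := hqnn i
    rw [hq0] at h1
    nlinarith
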